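/- Let A, B, C ∈ ℝ^{n×n} with B and C invertible. If σ_min(B⁻¹AC⁻¹) > 1, then for every F ∈ ℝ^{n×n} the new generalized absolute value matrix equation AX + B|CX| = F has exactly one solution X ∈ ℝ^{n×n}. -/

import Mathlib

open Matrix

/-- Componentwise absolute value of a real matrix. -/
noncomputable def matAbs {n : ℕ} (M : Matrix (Fin n) (Fin n) ℝ) : Matrix (Fin n) (Fin n) ℝ :=
  fun i j => |M i j|

/-- Smallest singular value: the square root of the smallest eigenvalue of MᵀM. -/
noncomputable def sigmaMin {n : ℕ} (M : Matrix (Fin n) (Fin n) ℝ) : ℝ :=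
  Real.sqrt (sInf (spectrum ℝ (Mᵀ * M)))

namespace NGAVMEAux

variable {n : ℕ}

/-- A Hermitian matrix whose spectrum is bounded below by `c` dominates `c • 1`. -/
lemma posSemidef_sub_smul (H : Matrix (Fin n) (Fin n) ℝ) (hH : H.IsHermitian) (c : ℝ)
    (hc : ∀ μ ∈ spectrum ℝ H, c ≤ μ) : (H - c • 1).PosSemidef := by
  have h1 : H - c • 1 =
      (hH.eigenvectorUnitary : Matrix (Fin n) (Fin n) ℝ) *
        diagonal (fun i => hH.eigenvalues i - c) *
        (hH.eigenvectorUnitary : Matrix (Fin n) (Fin n) ℝ)ᴴ := by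
    have hst := hH.spectral_theorem
    rw [Unitary.conjStarAlgAut_apply] at hst
    have hU : (hH.eigenvectorUnitary : Matrix (Fin n) (Fin n) ℝ) *
        star (hH.eigenvectorUnitary : Matrix (Fin n) (Fin n) ℝ) = 1 :=
      (Matrix.mem_unitaryGroup_iff).mp hH.eigenvectorUnitary.2
    have hdiag : diagonal (fun i => hH.eigenvalues i - c) =
        diagonal (RCLike.ofReal ∘ hH.eigenvalues) - c • (1 : Matrix (Fin n) (Fin n) ℝ) := by
      rw [Matrix.smul_one_eq_diagonal, ← Matrix.diagonal_sub]
      rfl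
    rw [hdiag, Matrix.mul_sub, Matrix.sub_mul, ← Matrix.star_eq_conjTranspose, ← hst]
    congr 1
    rw [Matrix.mul_smul, Matrix.mul_one, Matrix.smul_mul, hU]
  rw [h1]
  exact (Matrix.posSemidef_diagonal_iff.mpr fun i =>
    sub_nonneg.2 (hc _ (hH.eigenvalues_mem_spectrum_real i))).mul_mul_conjTranspose_same _

lemma quad_bound (M : Matrix (Fin n) (Fin n) ℝ) (c : ℝ)
    (hpsd : (Mᵀ * M - c • 1).PosSemidef) (x : Fin n → ℝ) :
    c * (x ⬝ᵥ x) ≤ (M *ᵥ x) ⬝ᵥ (M *ᵥ x) := by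
  have h0 := hpsd.dotProduct_mulVec_nonneg x
  have hstar : star x = x := rfl
  rw [hstar, Matrix.sub_mulVec, dotProduct_sub, Matrix.smul_mulVec, Matrix.one_mulVec,
    dotProduct_smul, ← Matrix.mulVec_mulVec, Matrix.dotProduct_mulVec,
    Matrix.vecMul_transpose] at h0
  have : (M *ᵥ x) ⬝ᵥ (M *ᵥ x) - c * (x ⬝ᵥ x) ≥ 0 := by
    simpa [smul_eq_mul, sub_eq_add_neg] using h0
  linarith

lemma dotProduct_self_nonneg (v : Fin n → ℝ) : 0 ≤ v ⬝ᵥ v :=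
  Finset.sum_nonneg fun i _ => mul_self_nonneg _

/-- Existence and uniqueness for the reduced equation `M Y + |Y| = G`. -/
lemma exists_unique_reduced (M : Matrix (Fin n) (Fin n) ℝ) (c : ℝ) (hc : 1 < c)
    (hquad : ∀ x : Fin n → ℝ, c * (x ⬝ᵥ x) ≤ (M *ᵥ x) ⬝ᵥ (M *ᵥ x))
    (G : Matrix (Fin n) (Fin n) ℝ) :
    ∃! Y : Matrix (Fin n) (Fin n) ℝ, M * Y + matAbs Y = G := by
  have hcpos : (0 : ℝ) < c := lt_trans one_pos hc
  -- M is invertible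
  have hMinj : Function.Injective (M.mulVec) := by
    intro x y hxy
    have hz : M *ᵥ (x - y) = 0 := by
      rw [Matrix.mulVec_sub, hxy, sub_self]
    have h1 := hquad (x - y)
    rw [hz] at h1
    simp only [zero_dotProduct] at h1
    have h2 : (x - y) ⬝ᵥ (x - y) ≤ 0 := by nlinarith [dotProduct_self_nonneg (x - y)]
    have h4 : (x - y) ⬝ᵥ (x - y) = 0 :=
      le_antisymm h2 (dotProduct_self_nonneg _)
    have := dotProduct_self_eq_zero.mp h4
    exact sub_eq_zero.mp this
  have hM : IsUnit M := Matrix.mulVec_injective_iff_isUnit.mp hMinj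
  have hMdet : IsUnit M.det := (Matrix.isUnit_iff_isUnit_det M).mp hM
  have hMM : M * M⁻¹ = 1 := Matrix.mul_nonsing_inv M hMdet
  have hMM' : M⁻¹ * M = 1 := Matrix.nonsing_inv_mul M hMdet
  -- bound on the inverse
  have hinv : ∀ v : Fin n → ℝ, (M⁻¹ *ᵥ v) ⬝ᵥ (M⁻¹ *ᵥ v) ≤ c⁻¹ * (v ⬝ᵥ v) := by
    intro v
    have h1 := hquad (M⁻¹ *ᵥ v)
    rw [Matrix.mulVec_mulVec, hMM, Matrix.one_mulVec] at h1
    have h2 := mul_le_mul_of_nonneg_left h1 (inv_nonneg.mpr hcpos.le)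
    rwa [← mul_assoc, inv_mul_cancel₀ hcpos.ne', one_mul] at h2
  -- Frobenius-type bound
  have hfrob : ∀ N : Matrix (Fin n) (Fin n) ℝ,
      (∑ p : Fin n × Fin n, ((M⁻¹ * N) p.1 p.2) ^ 2) ≤
        c⁻¹ * ∑ p : Fin n × Fin n, (N p.1 p.2) ^ 2 := by
    intro N
    have hswap : ∀ (P : Matrix (Fin n) (Fin n) ℝ),
        (∑ p : Fin n × Fin n, (P p.1 p.2) ^ 2) = ∑ j, (fun i => P i j) ⬝ᵥ (fun i => P i j) := by
      intro P
      rw [Fintype.sum_prod_type]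
      rw [Finset.sum_comm]
      simp [dotProduct, sq]
    rw [hswap, hswap, Finset.mul_sum]
    apply Finset.sum_le_sum
    intro j _
    have hcol : (fun i => (M⁻¹ * N) i j) = M⁻¹ *ᵥ (fun i => N i j) := by
      funext i
      simp [Matrix.mul_apply, Matrix.mulVec, dotProduct]
    rw [hcol]
    exact hinv _
  -- set up the fixed point problem on Euclidean space
  set s : ℝ := Real.sqrt c with hs
  have hs1 : 1 < s := by
    rw [hs, show (1:ℝ) = Real.sqrt 1 by simp]
    exact Real.sqrt_lt_sqrt (by norm_num) hc
  have hspos : 0 < s := lt_trans one_pos hs1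
  have hssq : s ^ 2 = c := Real.sq_sqrt (le_of_lt hcpos)
  set E := EuclideanSpace ℝ (Fin n × Fin n) with hE
  let toE : Matrix (Fin n) (Fin n) ℝ → E :=
    fun Y => (WithLp.equiv 2 ((Fin n × Fin n) → ℝ)).symm (fun p => Y p.1 p.2)
  let ofE : E → Matrix (Fin n) (Fin n) ℝ :=
    fun y => fun i j => (WithLp.equiv 2 ((Fin n × Fin n) → ℝ)) y (i, j)
  have hofto : ∀ Y, ofE (toE Y) = Y := fun Y => rfl
  have htoof : ∀ y, toE (ofE y) = y := fun y => rfl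
  have htoE_inj : Function.Injective toE := fun Y Z h => by
    rw [← hofto Y, ← hofto Z, h]
  -- norm of toE
  have hnorm : ∀ N : Matrix (Fin n) (Fin n) ℝ,
      ‖toE N‖ = Real.sqrt (∑ p : Fin n × Fin n, (N p.1 p.2) ^ 2) := by
    intro N
    rw [EuclideanSpace.norm_eq]
    congr 1
    apply Finset.sum_congr rfl
    intro p _
    rw [Real.norm_eq_abs, sq_abs]
    rfl
  -- the contraction map
  let T : E → E := fun y => toE (M⁻¹ * (G - matAbs (ofE y)))
  have hlip : ∀ y z : E, dist (T y) (T z) ≤ s⁻¹ * dist y z := by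
    intro y z
    have hdiff : T y - T z = toE (M⁻¹ * (matAbs (ofE z) - matAbs (ofE y))) := by
      show toE (M⁻¹ * (G - matAbs (ofE y))) - toE (M⁻¹ * (G - matAbs (ofE z))) = _
      have : ∀ P Q : Matrix (Fin n) (Fin n) ℝ, toE P - toE Q = toE (P - Q) := fun P Q => rfl
      rw [this, ← Matrix.mul_sub]
      congr 2
      abel
    have hyz : y - z = toE (ofE y - ofE z) := rfl
    rw [dist_eq_norm, hdiff, dist_eq_norm, hyz, hnorm, hnorm]
    set D := matAbs (ofE z) - matAbs (ofE y) with hD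
    have h1 : (∑ p : Fin n × Fin n, ((M⁻¹ * D) p.1 p.2) ^ 2) ≤
        c⁻¹ * ∑ p : Fin n × Fin n, (D p.1 p.2) ^ 2 := hfrob D
    have h2 : (∑ p : Fin n × Fin n, (D p.1 p.2) ^ 2) ≤
        ∑ p : Fin n × Fin n, ((ofE y - ofE z) p.1 p.2) ^ 2 := by
      apply Finset.sum_le_sum
      intro p _
      have habs : |D p.1 p.2| ≤ |(ofE y - ofE z) p.1 p.2| := by
        rw [hD]
        simp only [Matrix.sub_apply, matAbs]
        calc |(|ofE z p.1 p.2| - |ofE y p.1 p.2|)| ≤ |ofE z p.1 p.2 - ofE y p.1 p.2| :=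
              abs_abs_sub_abs_le_abs_sub _ _
          _ = |(ofE y p.1 p.2 - ofE z p.1 p.2)| := abs_sub_comm _ _
      calc (D p.1 p.2) ^ 2 = |D p.1 p.2| ^ 2 := (sq_abs _).symm
        _ ≤ |(ofE y - ofE z) p.1 p.2| ^ 2 := by
            exact pow_le_pow_left₀ (abs_nonneg _) habs 2
        _ = ((ofE y - ofE z) p.1 p.2) ^ 2 := sq_abs _
    have h3 : (∑ p : Fin n × Fin n, ((M⁻¹ * D) p.1 p.2) ^ 2) ≤
        c⁻¹ * ∑ p : Fin n × Fin n, ((ofE y - ofE z) p.1 p.2) ^ 2 := by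
      refine le_trans h1 ?_
      exact mul_le_mul_of_nonneg_left h2 (le_of_lt (inv_pos.mpr hcpos))
    calc Real.sqrt (∑ p : Fin n × Fin n, ((M⁻¹ * D) p.1 p.2) ^ 2)
        ≤ Real.sqrt (c⁻¹ * ∑ p : Fin n × Fin n, ((ofE y - ofE z) p.1 p.2) ^ 2) :=
          Real.sqrt_le_sqrt h3
      _ = s⁻¹ * Real.sqrt (∑ p : Fin n × Fin n, ((ofE y - ofE z) p.1 p.2) ^ 2) := by
          rw [Real.sqrt_mul (by positivity), Real.sqrt_inv]
  set K : NNReal := ⟨s⁻¹, le_of_lt (inv_pos.mpr hspos)⟩ with hK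
  have hKlt : K < 1 := by
    rw [← NNReal.coe_lt_coe]
    push_cast
    exact inv_lt_one_of_one_lt₀ hs1
  have hT : ContractingWith K T :=
    ⟨hKlt, LipschitzWith.of_dist_le_mul fun y z => hlip y z⟩
  -- fixed points of T correspond to solutions
  have hfix : ∀ Y : Matrix (Fin n) (Fin n) ℝ,
      (M * Y + matAbs Y = G ↔ Function.IsFixedPt T (toE Y)) := by
    intro Y
    constructor
    · intro hY
      show T (toE Y) = toE Y
      have : M⁻¹ * (G - matAbs (ofE (toE Y))) = Y := by
        rw [hofto, ← hY]
        rw [add_sub_cancel_right, ← Matrix.mul_assoc, hMM', Matrix.one_mul]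
      show toE (M⁻¹ * (G - matAbs (ofE (toE Y)))) = toE Y
      rw [this]
    · intro hY
      have h1 : M⁻¹ * (G - matAbs Y) = Y := by
        have := htoE_inj hY
        rwa [hofto] at this
      have h2 : M * (M⁻¹ * (G - matAbs Y)) = M * Y := by rw [h1]
      rw [← Matrix.mul_assoc, hMM, Matrix.one_mul] at h2
      rw [← h2]
      abel
  -- conclude using the Banach fixed point theorem
  obtain y₀ := ContractingWith.fixedPoint T hT
  refine ⟨ofE (ContractingWith.fixedPoint T hT), ?_, ?_⟩
  · show M * ofE (ContractingWith.fixedPoint T hT) +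
      matAbs (ofE (ContractingWith.fixedPoint T hT)) = G
    rw [hfix, htoof]
    exact hT.fixedPoint_isFixedPt
  · intro Y hY
    have := hT.fixedPoint_unique ((hfix Y).mp hY)
    rw [← hofto Y, this]

end NGAVMEAux

/-- If B and C are invertible and σ_min(B⁻¹AC⁻¹) > 1, then for every F the NGAVME
AX + B|CX| = F has exactly one solution. -/
theorem ngavme_unique_of_sigmaMin {n : ℕ} (A B C : Matrix (Fin n) (Fin n) ℝ)
    (hB : IsUnit B) (hC : IsUnit C) (h : 1 < sigmaMin (B⁻¹ * A * C⁻¹)) :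
    ∀ F : Matrix (Fin n) (Fin n) ℝ,
      ∃! X : Matrix (Fin n) (Fin n) ℝ, A * X + B * matAbs (C * X) = F := by
  intro F
  set M := B⁻¹ * A * C⁻¹ with hMdef
  set c : ℝ := sInf (spectrum ℝ (Mᵀ * M)) with hcdef
  have hc1 : 1 < c := by
    by_contra hcon
    push_neg at hcon
    have : sigmaMin M ≤ 1 := by
      rw [sigmaMin, ← hcdef]
      calc Real.sqrt c ≤ Real.sqrt 1 := Real.sqrt_le_sqrt hcon
        _ = 1 := Real.sqrt_one
    linarith
  -- sInf is a lower bound for the (finite, closed) real spectrum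
  have hlb : ∀ μ ∈ spectrum ℝ (Mᵀ * M), c ≤ μ := by
    intro μ hμ
    apply csInf_le _ hμ
    exact (Matrix.finite_real_spectrum).bddBelow
  have hherm : (Mᵀ * M).IsHermitian := by
    unfold Matrix.IsHermitian
    rw [Matrix.conjTranspose_mul]
    have : ∀ P : Matrix (Fin n) (Fin n) ℝ, Pᴴ = Pᵀ := fun P => rfl
    rw [this, this, Matrix.transpose_transpose]
  have hpsd := NGAVMEAux.posSemidef_sub_smul (Mᵀ * M) hherm c hlb
  have hquad := fun x => NGAVMEAux.quad_bound M c hpsd x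
  -- reduce to the equation M Y + |Y| = B⁻¹ F
  have hBdet : IsUnit B.det := (Matrix.isUnit_iff_isUnit_det B).mp hB
  have hCdet : IsUnit C.det := (Matrix.isUnit_iff_isUnit_det C).mp hC
  have hBB : B * B⁻¹ = 1 := Matrix.mul_nonsing_inv B hBdet
  have hBB' : B⁻¹ * B = 1 := Matrix.nonsing_inv_mul B hBdet
  have hCC : C * C⁻¹ = 1 := Matrix.mul_nonsing_inv C hCdet
  have hCC' : C⁻¹ * C = 1 := Matrix.nonsing_inv_mul C hCdet
  obtain ⟨Y₀, hY₀, hY₀uniq⟩ :=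
    NGAVMEAux.exists_unique_reduced M c hc1 hquad (B⁻¹ * F)
  have hiff : ∀ X : Matrix (Fin n) (Fin n) ℝ,
      (A * X + B * matAbs (C * X) = F ↔ M * (C * X) + matAbs (C * X) = B⁻¹ * F) := by
    intro X
    have hMCX : M * (C * X) = B⁻¹ * (A * X) := by
      rw [hMdef]
      rw [Matrix.mul_assoc (B⁻¹ * A) C⁻¹ (C * X), ← Matrix.mul_assoc C⁻¹ C X, hCC',
        Matrix.one_mul, Matrix.mul_assoc]
    rw [hMCX]
    constructor
    · intro hX
      rw [← hX]
      rw [Matrix.mul_add, ← Matrix.mul_assoc B⁻¹ B, hBB', Matrix.one_mul]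
    · intro hX
      have h2 : B * (B⁻¹ * (A * X) + matAbs (C * X)) = B * (B⁻¹ * F) := by rw [hX]
      rw [Matrix.mul_add, ← Matrix.mul_assoc B B⁻¹ (A * X), ← Matrix.mul_assoc B B⁻¹ F,
        hBB, Matrix.one_mul, Matrix.one_mul] at h2
      exact h2
  refine ⟨C⁻¹ * Y₀, ?_, ?_⟩
  · show A * (C⁻¹ * Y₀) + B * matAbs (C * (C⁻¹ * Y₀)) = F
    rw [hiff, ← Matrix.mul_assoc C C⁻¹ Y₀, hCC, Matrix.one_mul]
    exact hY₀
  · intro X hX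
    have hYX : C * X = Y₀ := hY₀uniq _ ((hiff X).mp hX)
    calc X = C⁻¹ * (C * X) := by rw [← Matrix.mul_assoc C⁻¹ C X, hCC', Matrix.one_mul]
      _ = C⁻¹ * Y₀ := by rw [hYX]
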